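/- If χ₁ and χ₂ are Gaussian pushforwards on a finite abelian group G, then their convolution χ₁ * χ₂, defined by (χ₁ * χ₂)(g) = Σ_{g'∈G} χ₁(g − g') χ₂(g'), is also a Gaussian pushforward on G. -/

import Mathlib

open scoped RealInnerProductSpace

/-- A function `χ : G → ℝ` on a finite abelian group is a *Gaussian pushforward* if
there is a lattice `L` (a discrete additive subgroup of a finite-dimensional real inner
product space) and a group homomorphism `h : L →+ G` such that for every `g`,
`χ g` is the (absolutely convergent) sum of `ρ x = exp (−π ⟨x, x⟩)` over `h ⁻¹ g`. -/
def IsGaussianPushforward {G : Type} [AddCommGroup G] (χ : G → ℝ) : Prop :=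
  ∃ (V : Type) (iN : NormedAddCommGroup V),
    letI := iN
    ∃ (iI : InnerProductSpace ℝ V),
      letI := iI
      FiniteDimensional ℝ V ∧
      ∃ (L : AddSubgroup V) (h : L →+ G),
        DiscreteTopology L ∧
        ∀ g : G, HasSum (fun x : {x : L // h x = g} =>
          Real.exp (-Real.pi * ⟪((x : L) : V), ((x : L) : V)⟫)) (χ g)

/-- Convolution of real-valued functions on a finite abelian group. -/
def convolve {G : Type} [AddCommGroup G] [Fintype G] (f g : G → ℝ) : G → ℝ :=
  fun x => ∑ y : G, f (x - y) * g y

set_option maxHeartbeats 1000000 in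
/-- The convolution of two Gaussian pushforwards is a Gaussian pushforward. -/
theorem IsGaussianPushforward.convolve
    {G : Type} [AddCommGroup G] [Fintype G] {χ₁ χ₂ : G → ℝ}
    (h₁ : IsGaussianPushforward χ₁) (h₂ : IsGaussianPushforward χ₂) :
    IsGaussianPushforward (convolve χ₁ χ₂) := by
  obtain ⟨V₁, iN₁, iI₁, fd₁, L₁, f₁, d₁, S₁⟩ := h₁
  obtain ⟨V₂, iN₂, iI₂, fd₂, L₂, f₂, d₂, S₂⟩ := h₂
  refine ⟨WithLp 2 (V₁ × V₂), inferInstance, inferInstance, ?_, ?_⟩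
  · exact (WithLp.linearEquiv 2 ℝ (V₁ × V₂)).symm.finiteDimensional
  set e : WithLp 2 (V₁ × V₂) ≃L[ℝ] V₁ × V₂ :=
    WithLp.prodContinuousLinearEquiv 2 ℝ V₁ V₂ with he
  set L : AddSubgroup (WithLp 2 (V₁ × V₂)) :=
    (L₁.prod L₂).comap (e : WithLp 2 (V₁ × V₂) →L[ℝ] V₁ × V₂).toLinearMap.toAddMonoidHom
    with hL
  have memL : ∀ x : WithLp 2 (V₁ × V₂), x ∈ L ↔ (e x).1 ∈ L₁ ∧ (e x).2 ∈ L₂ := by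
    intro x
    simp [hL, AddSubgroup.mem_comap, AddSubgroup.mem_prod]
  set p₁ : L →+ L₁ :=
    { toFun := fun x => ⟨(e x.1).1, ((memL x.1).mp x.2).1⟩
      map_zero' := by ext; simp
      map_add' := by intro x y; ext; simp } with hp₁
  set p₂ : L →+ L₂ :=
    { toFun := fun x => ⟨(e x.1).2, ((memL x.1).mp x.2).2⟩
      map_zero' := by ext; simp
      map_add' := by intro x y; ext; simp } with hp₂
  refine ⟨L, (f₁.comp p₁) + (f₂.comp p₂), ?_, ?_⟩
  · -- discreteness
    have hcont : Continuous (fun x : L => (p₁ x, p₂ x)) := by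
      apply Continuous.prodMk
      · exact Continuous.subtype_mk ((continuous_fst.comp e.continuous).comp
          continuous_subtype_val) _
      · exact Continuous.subtype_mk ((continuous_snd.comp e.continuous).comp
          continuous_subtype_val) _
    have hinj : Function.Injective (fun x : L => (p₁ x, p₂ x)) := by
      intro x y hxy
      simp only [Prod.mk.injEq, hp₁, hp₂, AddMonoidHom.coe_mk, ZeroHom.coe_mk,
        Subtype.mk.injEq] at hxy
      have : e x.1 = e y.1 := Prod.ext hxy.1 hxy.2
      exact Subtype.ext (e.injective this)
    rw [discreteTopology_iff_isOpen_singleton]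
    intro x
    have : {x} = (fun x : L => (p₁ x, p₂ x)) ⁻¹' {(p₁ x, p₂ x)} := by
      ext z
      simp only [Set.mem_singleton_iff, Set.mem_preimage]
      exact ⟨fun hz => by rw [hz], fun hz => hinj hz⟩
    rw [this]
    exact hcont.isOpen_preimage _ (isOpen_discrete _)
  · intro g
    -- the sigma decomposition of the fiber
    set h : L →+ G := (f₁.comp p₁) + (f₂.comp p₂) with hh
    set T := Σ y : G, ({a : L₁ // f₁ a = g - y} × {b : L₂ // f₂ b = y}) with hT
    have hmem : ∀ (a : L₁) (b : L₂),
        ((WithLp.equiv 2 (V₁ × V₂)).symm ((a : V₁), (b : V₂))) ∈ L := by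
      intro a b
      rw [memL]
      exact ⟨a.2, b.2⟩
    set ψ : T ≃ {x : L // h x = g} :=
      { toFun := fun t =>
          ⟨⟨(WithLp.equiv 2 (V₁ × V₂)).symm ((t.2.1.1 : V₁), (t.2.2.1 : V₂)),
             hmem t.2.1.1 t.2.2.1⟩, by
            obtain ⟨y, a, b⟩ := t
            have ha : (p₁ ⟨_, hmem a.1 b.1⟩) = a.1 := rfl
            have hb : (p₂ ⟨_, hmem a.1 b.1⟩) = b.1 := rfl
            simp only [hh, AddMonoidHom.add_apply, AddMonoidHom.coe_comp,
              Function.comp_apply, ha, hb, a.2, b.2]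
            abel⟩
        invFun := fun x =>
          ⟨f₂ (p₂ x.1), (⟨p₁ x.1, by
              have hx := x.2
              simp only [hh, AddMonoidHom.add_apply, AddMonoidHom.coe_comp,
                Function.comp_apply] at hx
              exact eq_sub_of_add_eq hx⟩,
            ⟨p₂ x.1, rfl⟩)⟩
        left_inv := by
          rintro ⟨y, ⟨a, ha⟩, ⟨b, hb⟩⟩
          subst hb
          rfl
        right_inv := by
          rintro ⟨x, hx⟩
          rfl } with hψ
    have hfib : ∀ y : G, HasSum (fun p : {a : L₁ // f₁ a = g - y} × {b : L₂ // f₂ b = y} =>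
        Real.exp (-Real.pi * ⟪((p.1 : L₁) : V₁), ((p.1 : L₁) : V₁)⟫) *
        Real.exp (-Real.pi * ⟪((p.2 : L₂) : V₂), ((p.2 : L₂) : V₂)⟫))
        (χ₁ (g - y) * χ₂ y) := fun y =>
      (S₁ (g - y)).mul (S₂ y)
        ((S₁ (g - y)).summable.mul_of_nonneg (S₂ y).summable
          (fun _ => Real.exp_nonneg _) (fun _ => Real.exp_nonneg _))
    have key : HasSum (fun t : T =>
        Real.exp (-Real.pi * ⟪((t.2.1 : L₁) : V₁), ((t.2.1 : L₁) : V₁)⟫) *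
        Real.exp (-Real.pi * ⟪((t.2.2 : L₂) : V₂), ((t.2.2 : L₂) : V₂)⟫))
        (∑ y : G, χ₁ (g - y) * χ₂ y) := by
      refine HasSum.sigma_of_hasSum (hasSum_fintype _) (fun y => hfib y) ?_
      rw [summable_sigma_of_nonneg
        (fun _ => mul_nonneg (Real.exp_nonneg _) (Real.exp_nonneg _))]
      exact ⟨fun y => (hfib y).summable, Summable.of_finite⟩
    have hfun : ((fun x : {x : L // (f₁.comp p₁ + f₂.comp p₂) x = g} =>
        Real.exp (-Real.pi * ⟪((x : L) : WithLp 2 (V₁ × V₂)),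
          ((x : L) : WithLp 2 (V₁ × V₂))⟫)) ∘ ψ) =
        fun t : T =>
          Real.exp (-Real.pi * ⟪((t.2.1 : L₁) : V₁), ((t.2.1 : L₁) : V₁)⟫) *
          Real.exp (-Real.pi * ⟪((t.2.2 : L₂) : V₂), ((t.2.2 : L₂) : V₂)⟫) := by
      funext t
      obtain ⟨y, a, b⟩ := t
      simp only [Function.comp_apply, hψ, Equiv.coe_fn_mk, WithLp.prod_inner_apply,
        WithLp.equiv_symm_apply, WithLp.ofLp_toLp, ← Real.exp_add]
      congr 1
      ring
    rw [← Equiv.hasSum_iff ψ, hfun]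
    exact key
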